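/- Let N be a positive integer and let x : ℤ/Nℤ → {-1,1} with Σ(x) := ∑_{i ∈ ℤ/Nℤ} x_i = 0. Let x̃ : ℤ → {-1,1} be the lift of x (x̃_i = x_{i mod N}). Then the supremum of all interval sums Σ_a^b(x̃) = ∑_{a ≤ i ≤ b} x̃_i over a ≤ b equals the negative of the infimum of all such interval sums; i.e. Σ_max(x̃) = -Σ_min(x̃). -/

import Mathlib

/-- The set of all interval sums of the lift of `x : ZMod N → ℤ` to `ℤ`,
together with `0` (the empty interval sum). -/
def intervalSums (N : ℕ) (x : ZMod N → ℤ) : Set ℤ :=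
  {0} ∪ {s : ℤ | ∃ a b : ℤ, a ≤ b ∧ s = ∑ i ∈ Finset.Icc a b, x (i : ZMod N)}

lemma my_Icc_eq (a b : ℤ) : Finset.Icc a b = Finset.Ico a (b + 1) := by
  ext i; simp [Int.lt_add_one_iff]

lemma period_sum (N : ℕ) [NeZero N] (x : ZMod N → ℤ)
    (hsum : ∑ i, x i = 0) (a : ℤ) :
    ∑ i ∈ Finset.Ico a (a + N), x (i : ZMod N) = 0 := by
  rw [← hsum]
  refine Finset.sum_nbij' (fun i => (i : ZMod N)) (fun z => a + ((z - a).val : ℤ)) ?_ ?_ ?_ ?_ ?_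
  · intro i _; exact Finset.mem_univ _
  · intro z _
    have h := ZMod.val_lt (z - (a : ZMod N))
    simp only [Finset.mem_Ico]
    omega
  · intro i hi
    simp only [Finset.mem_Ico] at hi
    have : ((i : ZMod N) - (a : ZMod N)) = ((i - a : ℤ) : ZMod N) := by push_cast; ring
    rw [show ((i : ZMod N) - (a : ZMod N)) = ((i - a : ℤ) : ZMod N) from this]
    have h2 : ((((i - a : ℤ) : ZMod N)).val : ℤ) = (i - a) % N := ZMod.val_intCast _
    have h3 : (i - a) % (N : ℤ) = i - a := Int.emod_eq_of_lt (by omega) (by omega)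
    omega
  · intro z _
    push_cast
    rw [ZMod.natCast_val, ZMod.cast_id]
    ring
  · intro i _; rfl

lemma split_sum (N : ℕ) [NeZero N] (x : ZMod N → ℤ)
    (hsum : ∑ i, x i = 0) (a b : ℤ) (h : a + N ≤ b + 1) :
    ∑ i ∈ Finset.Icc a b, x (i : ZMod N) = ∑ i ∈ Finset.Icc (a + N) b, x (i : ZMod N) := by
  rw [my_Icc_eq, my_Icc_eq, ← Finset.Ico_union_Ico_eq_Ico (b := a + (N : ℤ)) (by have := NeZero.pos N; omega) h,
    Finset.sum_union (Finset.Ico_disjoint_Ico_consecutive _ _ _), period_sum N x hsum, zero_add]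

lemma reduce (N : ℕ) [NeZero N] (x : ZMod N → ℤ) (hsum : ∑ i, x i = 0) :
    ∀ k : ℕ, ∀ a b : ℤ, a ≤ b → (b - a).toNat = k →
    ∃ a' b' : ℤ, a' ≤ b' ∧ b' < a' + N ∧
      ∑ i ∈ Finset.Icc a b, x (i : ZMod N) = ∑ i ∈ Finset.Icc a' b', x (i : ZMod N) := by
  intro k
  induction k using Nat.strong_induction_on with
  | _ k ih =>
    intro a b hab hk
    by_cases hb : b < a + N
    · exact ⟨a, b, hab, hb, rfl⟩
    · push_neg at hb
      have hN := NeZero.pos N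
      have h1 : a + N ≤ b := hb
      obtain ⟨a', b', h2, h3, h4⟩ := ih (b - (a + N)).toNat (by omega) (a + N) b (by omega) rfl
      exact ⟨a', b', h2, h3, by rw [split_sum N x hsum a b (by omega), h4]⟩

lemma neg_mem (N : ℕ) [NeZero N] (x : ZMod N → ℤ) (hsum : ∑ i, x i = 0)
    {s : ℤ} (hs : s ∈ intervalSums N x) : -s ∈ intervalSums N x := by
  rcases hs with h0 | ⟨a, b, hab, hsv⟩
  · simp only [Set.mem_singleton_iff] at h0; subst h0; left; simp
  · obtain ⟨a', b', h1, h2, h3⟩ := reduce N x hsum (b - a).toNat a b hab rfl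
    rw [hsv, h3]
    by_cases hfull : b' = a' + N - 1
    · left
      have : Finset.Icc a' b' = Finset.Ico a' (a' + N) := by rw [my_Icc_eq]; congr 1; omega
      rw [Set.mem_singleton_iff, this, period_sum N x hsum, neg_zero]
    · right
      refine ⟨b' + 1, a' + N - 1, by omega, ?_⟩
      have hz : ∑ i ∈ Finset.Icc a' (a' + N - 1), x (i : ZMod N) = 0 := by
        have : Finset.Icc a' (a' + N - 1) = Finset.Ico a' (a' + N) := by rw [my_Icc_eq]; congr 1; omega
        rw [this, period_sum N x hsum]
      have hsplit : ∑ i ∈ Finset.Icc a' (a' + N - 1), x (i : ZMod N)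
          = ∑ i ∈ Finset.Icc a' b', x (i : ZMod N) + ∑ i ∈ Finset.Icc (b' + 1) (a' + N - 1), x (i : ZMod N) := by
        rw [my_Icc_eq, my_Icc_eq, my_Icc_eq,
          ← Finset.Ico_union_Ico_eq_Ico (b := b' + 1) (by omega) (by omega),
          Finset.sum_union (Finset.Ico_disjoint_Ico_consecutive _ _ _)]
      omega

lemma bound_mem (N : ℕ) [NeZero N] (x : ZMod N → ℤ) (hsum : ∑ i, x i = 0)
    (hx : ∀ i, x i = 1 ∨ x i = -1)
    {s : ℤ} (hs : s ∈ intervalSums N x) : |s| ≤ N := by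
  rcases hs with h0 | ⟨a, b, hab, hsv⟩
  · simp only [Set.mem_singleton_iff] at h0; subst h0; simp [Nat.pos_of_ne_zero]
  · obtain ⟨a', b', h1, h2, h3⟩ := reduce N x hsum (b - a).toNat a b hab rfl
    rw [hsv, h3]
    calc |∑ i ∈ Finset.Icc a' b', x (i : ZMod N)| ≤ ∑ i ∈ Finset.Icc a' b', |x (i : ZMod N)| :=
          Finset.abs_sum_le_sum_abs _ _
      _ ≤ ∑ _i ∈ Finset.Icc a' b', 1 := Finset.sum_le_sum (fun i _ => by rcases hx (i : ZMod N) with h | h <;> simp [h])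
      _ = (Finset.Icc a' b').card := by simp
      _ ≤ N := by
          rw [Int.card_Icc]
          omega

theorem stmt_0 (N : ℕ) [NeZero N] (x : ZMod N → ℤ)
    (hx : ∀ i, x i = 1 ∨ x i = -1)
    (hsum : ∑ i, x i = 0) :
    sSup (intervalSums N x) = - sInf (intervalSums N x) := by
  have hne : (intervalSums N x).Nonempty := ⟨0, Or.inl rfl⟩
  have hba : BddAbove (intervalSums N x) := ⟨N, fun s hs => (abs_le.mp (bound_mem N x hsum hx hs)).2⟩
  have hbb : BddBelow (intervalSums N x) := ⟨-N, fun s hs => (abs_le.mp (bound_mem N x hsum hx hs)).1⟩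
  have hsup := Int.csSup_mem hne hba
  have hinf := Int.csInf_mem hne hbb
  have h1 : sInf (intervalSums N x) ≤ -sSup (intervalSums N x) :=
    csInf_le hbb (neg_mem N x hsum hsup)
  have h2 : -sInf (intervalSums N x) ≤ sSup (intervalSums N x) :=
    le_csSup hba (neg_mem N x hsum hinf)
  omega
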